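/- Let E be a pseudo effect algebra satisfying (RDP) and let m : E → ℝ be a signed measure. Then m is relatively bounded if and only if m = m₁ − m₂ for some measures m₁, m₂ on E. -/
import Mathlib


/-- A pseudo effect algebra: a partial algebra `(E; +, 0, 1)` where the partial
addition is encoded as `padd : E → E → Option E` (`padd a b = some c` means
`a + b` is defined and equals `c`). -/
class PseudoEffectAlgebra (E : Type) where
  padd : E → E → Option E
  pzero : E
  pone : E
  /-- (i) `a+b` and `(a+b)+c` exist iff `b+c` and `a+(b+c)` exist ... -/
  assoc_defined : ∀ a b c : E,
    (∃ x, padd a b = some x ∧ (padd x c).isSome) ↔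
      (∃ y, padd b c = some y ∧ (padd a y).isSome)
  /-- ... and in this case `(a+b)+c = a+(b+c)`. -/
  assoc_eq : ∀ a b c x y : E, padd a b = some x → padd b c = some y →
    padd x c = padd a y
  /-- (ii) there is exactly one `d` with `a + d = 1`. -/
  exists_unique_right : ∀ a : E, ∃! d, padd a d = some pone
  /-- (ii) there is exactly one `e` with `e + a = 1`. -/
  exists_unique_left : ∀ a : E, ∃! e, padd e a = some pone
  /-- (iii) if `a+b` exists, there are `d, e` with `a+b = d+a = b+e`. -/
  shift : ∀ a b c : E, padd a b = some c →
    ∃ d e, padd d a = some c ∧ padd b e = some c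
  /-- (iv) if `1+a` exists then `a = 0`. -/
  one_add : ∀ a : E, (padd pone a).isSome → a = pzero
  /-- (iv) if `a+1` exists then `a = 0`. -/
  add_one : ∀ a : E, (padd a pone).isSome → a = pzero

namespace PseudoEffectAlgebra

variable {E : Type} [PseudoEffectAlgebra E]

/-- The induced partial order: `a ≤ b` iff `b = a + c` for some `c ∈ E`. -/
def pLe (a b : E) : Prop := ∃ c, padd a c = some b

/-- The Riesz Decomposition Property (RDP). -/
def RDP (E : Type) [PseudoEffectAlgebra E] : Prop :=
  ∀ a₁ a₂ b₁ b₂ c : E, padd a₁ a₂ = some c → padd b₁ b₂ = some c →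
    ∃ d₁ d₂ d₃ d₄ : E, padd d₁ d₂ = some a₁ ∧ padd d₃ d₄ = some a₂ ∧
      padd d₁ d₃ = some b₁ ∧ padd d₂ d₄ = some b₂

/-- A signed measure on `E`. -/
def IsSignedMeasure (m : E → ℝ) : Prop :=
  ∀ a b c : E, padd a b = some c → m c = m a + m b

/-- A (positive) measure on `E`. -/
def IsMeasure (m : E → ℝ) : Prop :=
  IsSignedMeasure m ∧ ∀ a : E, 0 ≤ m a

/-- A state on `E`. -/
def IsState (s : E → ℝ) : Prop := IsMeasure s ∧ s pone = 1

/-- A Jordan signed measure: a difference of two measures. -/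
def IsJordan (m : E → ℝ) : Prop :=
  ∃ m₁ m₂ : E → ℝ, IsMeasure m₁ ∧ IsMeasure m₂ ∧ m = m₁ - m₂

/-- `m ≤⁺ m'` iff `m' - m` is a (positive) measure. -/
def MLe (m m' : E → ℝ) : Prop := IsMeasure (m' - m)

/-- The (partial) sum `x₁ + ⋯ + xₙ` of a nonempty list of elements of `E`. -/
def lsum : List E → Option E
  | [] => some pzero
  | [a] => some a
  | a :: b :: l => (lsum (b :: l)).bind (fun s => padd a s)

/-- `m : E → ℝ` is relatively bounded if the image of every subset of `E` bounded
above and below in the order of `E` is bounded in `ℝ`. -/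
def RelativelyBoundedE (m : E → ℝ) : Prop :=
  ∀ W : Set E, (∃ a : E, ∀ w ∈ W, pLe a w) → (∃ b : E, ∀ w ∈ W, pLe w b) →
    BddAbove (m '' W) ∧ BddBelow (m '' W)

lemma padd_one_zero : padd (pone : E) pzero = some pone := by
  obtain ⟨d, hd, -⟩ := exists_unique_right (pone : E)
  have : d = pzero := one_add d (by rw [hd]; rfl)
  rwa [this] at hd

lemma padd_zero_one : padd (pzero : E) pone = some pone := by
  obtain ⟨e, he, -⟩ := exists_unique_left (pone : E)
  have : e = pzero := add_one e (by rw [he]; rfl)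
  rwa [this] at he

lemma pzero_padd (b : E) : padd pzero b = some b := by
  obtain ⟨c, hc, -⟩ := exists_unique_right b
  obtain ⟨x, hx, hx'⟩ := (assoc_defined pzero b c).2
    ⟨pone, hc, by rw [padd_zero_one]; rfl⟩
  have hxc : padd x c = some pone := by
    rw [assoc_eq pzero b c x pone hx hc, padd_zero_one]
  obtain ⟨e, -, huniq⟩ := exists_unique_left c
  have h1 : x = e := huniq x hxc
  have h2 : b = e := huniq b hc
  rw [h1.trans h2.symm] at hx; exact hx

lemma padd_pzero (b : E) : padd b pzero = some b := by
  obtain ⟨e, he, -⟩ := exists_unique_left b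
  obtain ⟨y, hy, hy'⟩ := (assoc_defined e b pzero).1
    ⟨pone, he, by rw [padd_one_zero]; rfl⟩
  have hey : padd e y = some pone := by
    rw [← assoc_eq e b pzero pone y he hy, padd_one_zero]
  obtain ⟨d, -, huniq⟩ := exists_unique_right e
  have h1 : y = d := huniq y hey
  have h2 : b = d := huniq b he
  rw [h1.trans h2.symm] at hy; exact hy

lemma pLe_refl (a : E) : pLe a a := ⟨pzero, padd_pzero a⟩

lemma pzero_pLe (a : E) : pLe pzero a := ⟨a, pzero_padd a⟩

lemma pLe_trans {a b c : E} (h1 : pLe a b) (h2 : pLe b c) : pLe a c := by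
  obtain ⟨u, hu⟩ := h1
  obtain ⟨v, hv⟩ := h2
  obtain ⟨y, hy, hy'⟩ := (assoc_defined a u v).1 ⟨b, hu, by rw [hv]; rfl⟩
  refine ⟨y, ?_⟩
  rw [← assoc_eq a u v b y hu hy, hv]

lemma signedMeasure_pzero {m : E → ℝ} (hm : IsSignedMeasure m) : m pzero = 0 := by
  have := hm pzero pzero pzero (pzero_padd pzero)
  linarith

lemma measure_mono {m : E → ℝ} (hm : IsMeasure m) {a b : E} (h : pLe a b) :
    m a ≤ m b := by
  obtain ⟨c, hc⟩ := h
  have := hm.1 a c b hc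
  have := hm.2 c
  linarith

/-- If `a + b = c`, `x ≤ a`, `y ≤ b`, then `x + y` is defined and `≤ c`. -/
lemma padd_le_le {a b c x y : E} (hab : padd a b = some c)
    (hx : pLe x a) (hy : pLe y b) : ∃ z, padd x y = some z ∧ pLe z c := by
  obtain ⟨u, hu⟩ := hx
  obtain ⟨v, hv⟩ := hy
  -- Step A : a + y exists, (a+y) + v = c
  obtain ⟨t, ht, -⟩ := (assoc_defined a y v).2 ⟨b, hv, by rw [hab]; rfl⟩
  have htv : padd t v = some c := by
    rw [assoc_eq a y v t b ht hv, hab]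
  -- Step B : x + (u + y) = t
  obtain ⟨w, hw, -⟩ := (assoc_defined x u y).1 ⟨a, hu, by rw [ht]; rfl⟩
  have hxw : padd x w = some t := by
    rw [← assoc_eq x u y a w hu hw, ht]
  -- Step C : w = y + e for some e
  obtain ⟨d, e, -, hye⟩ := shift u y w hw
  -- Step D : x + y exists, (x+y) + e = t
  obtain ⟨z, hz, -⟩ := (assoc_defined x y e).2 ⟨w, hye, by rw [hxw]; rfl⟩
  have hze : padd z e = some t := by
    rw [assoc_eq x y e z w hz hye, hxw]
  exact ⟨z, hz, pLe_trans ⟨e, hze⟩ ⟨v, htv⟩⟩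

/-- Proposition 3.2: a signed measure `m` on a pseudo effect
algebra with (RDP) is relatively bounded iff `m = m₁ - m₂` for measures `m₁, m₂`. -/
theorem stmt2 (hRDP : RDP E) (m : E → ℝ) (hm : IsSignedMeasure m) :
    RelativelyBoundedE m ↔
      ∃ m₁ m₂ : E → ℝ, IsMeasure m₁ ∧ IsMeasure m₂ ∧ m = m₁ - m₂ := by
  constructor
  · intro hrb
    -- define m₁ a = sup { m x : x ≤ a }
    set S : E → Set ℝ := fun a => m '' {x | pLe x a} with hS
    have hne : ∀ a : E, (S a).Nonempty := fun a => ⟨m pzero, pzero, pzero_pLe a, rfl⟩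
    have hbdd : ∀ a : E, BddAbove (S a) := by
      intro a
      exact (hrb {x | pLe x a} ⟨pzero, fun w _ => pzero_pLe w⟩
        ⟨a, fun w hw => hw⟩).1
    set m₁ : E → ℝ := fun a => sSup (S a) with hm₁
    have hmem : ∀ {x a : E}, pLe x a → m x ≤ m₁ a := by
      intro x a hx
      exact le_csSup (hbdd a) ⟨x, hx, rfl⟩
    have hself : ∀ a : E, m a ≤ m₁ a := fun a => hmem (pLe_refl a)
    have hpos : ∀ a : E, 0 ≤ m₁ a := by
      intro a
      have := hmem (pzero_pLe a)
      rwa [signedMeasure_pzero hm] at this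
    -- additivity of m₁
    have hadd : IsSignedMeasure m₁ := by
      intro a b c hab
      apply le_antisymm
      · -- m₁ c ≤ m₁ a + m₁ b, using RDP
        apply csSup_le (hne c)
        rintro _ ⟨z, hz, rfl⟩
        obtain ⟨w, hw⟩ := hz
        obtain ⟨d₁, d₂, d₃, d₄, h12, h34, h13, h24⟩ := hRDP z w a b c hw hab
        have : m z = m d₁ + m d₂ := hm d₁ d₂ z h12
        have h1 : m d₁ ≤ m₁ a := hmem ⟨d₃, h13⟩
        have h2 : m d₂ ≤ m₁ b := hmem ⟨d₄, h24⟩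
        linarith
      · -- m₁ a + m₁ b ≤ m₁ c
        have key : ∀ x ∈ S a, ∀ y ∈ S b, x + y ≤ m₁ c := by
          rintro _ ⟨x, hx, rfl⟩ _ ⟨y, hy, rfl⟩
          obtain ⟨z, hz, hzc⟩ := padd_le_le hab hx hy
          have : m z = m x + m y := hm x y z hz
          have := hmem hzc
          linarith
        have step1 : ∀ x ∈ S a, x + m₁ b ≤ m₁ c := by
          intro x hx
          have : m₁ b ≤ m₁ c - x := csSup_le (hne b) (fun y hy => by
            have := key x hx y hy; linarith)
          linarith
        have : m₁ a ≤ m₁ c - m₁ b := csSup_le (hne a) (fun x hx => by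
          have := step1 x hx; linarith)
        linarith
    refine ⟨m₁, m₁ - m, ⟨hadd, hpos⟩, ⟨?_, ?_⟩, by funext a; simp⟩
    · intro a b c hab
      have h1 := hadd a b c hab
      have h2 := hm a b c hab
      simp only [Pi.sub_apply]
      linarith
    · intro a
      simp only [Pi.sub_apply, sub_nonneg]
      exact hself a
  · rintro ⟨m₁, m₂, hm1, hm2, rfl⟩
    intro W ⟨a, ha⟩ ⟨b, hb⟩
    constructor
    · refine ⟨m₁ b - m₂ a, ?_⟩
      rintro _ ⟨w, hw, rfl⟩
      have h1 : m₁ w ≤ m₁ b := measure_mono hm1 (hb w hw)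
      have h2 : m₂ a ≤ m₂ w := measure_mono hm2 (ha w hw)
      simp only [Pi.sub_apply]
      linarith
    · refine ⟨m₁ a - m₂ b, ?_⟩
      rintro _ ⟨w, hw, rfl⟩
      have h1 : m₁ a ≤ m₁ w := measure_mono hm1 (ha w hw)
      have h2 : m₂ w ≤ m₂ b := measure_mono hm2 (hb w hw)
      simp only [Pi.sub_apply]
      linarith

end PseudoEffectAlgebra
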